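/- arXiv:1012.2743 — 3 statements merged into one kernel-verified Lean document; each statement's English description precedes it below -/
import Mathlib

section
/- Fix an integer m ≥ 2 and let μ be the probability distribution on [0,∞) whose k-th moment equals the Fuss–Catalan number α_k(m) for every k ≥ 0. Then its Stieltjes transform s^{(m)}(z) := ∫ (x − z)⁻¹ dμ(x) satisfies, for every z in the upper half-plane ℂ⁺, the algebraic equation 1 + z·s^{(m)}(z) + (−1)^{m+1}·z^m·(s^{(m)}(z))^{m+1} = 0. -/
open MeasureTheory

/-- The Fuss–Catalan number `α_k(m) = (1/(mk+1)) · C(km+k, k)`, as a real number. -/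
noncomputable def fussCatalan (m k : ℕ) : ℝ :=
  (Nat.choose (k * m + k) k : ℝ) / (m * k + 1)

section Aux

open Finset

/-- `Bc p s n = C(s + p n, n)` as a real number. -/
noncomputable def Bc (p s n : ℕ) : ℝ := (Nat.choose (s + p * n) n : ℝ)

/-- Raney number `(r/(r+pk)) C(r+pk, k)` written without division. -/
noncomputable def FC (p r : ℕ) : ℕ → ℝ
  | 0 => 1
  | (k+1) => (Nat.choose (r + p*(k+1)) (k+1) : ℝ) - p * (Nat.choose (r + p*k + (p-1)) k : ℝ)

lemma Bc_zero (p s : ℕ) : Bc p s 0 = 1 := by simp [Bc]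

lemma FC_zero (p r : ℕ) : FC p r 0 = 1 := rfl

lemma FC_succ (p r k : ℕ) :
    FC p r (k+1) = (Nat.choose (r + p*(k+1)) (k+1) : ℝ) - p * (Nat.choose (r + p*k + (p-1)) k : ℝ) := rfl

lemma keyN (p r k : ℕ) (hp : 1 ≤ p) :
    (r + p*(k+1)) * Nat.choose (r + p*k + (p-1)) k
      = Nat.choose (r + p*(k+1)) (k+1) * (k+1) := by
  have h := Nat.add_one_mul_choose_eq (r + p*k + (p-1)) k
  have hM1 : r + p*k + (p-1) + 1 = r + p*(k+1) := by rw [Nat.mul_succ]; omega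
  rw [hM1] at h
  exact h

/-- Key: `(r + pk) * FC p r k = r * C(r+pk, k)`. -/
lemma FC_key (p r : ℕ) (hp : 1 ≤ p) (k : ℕ) :
    ((r : ℝ) + p * k) * FC p r k = r * (Nat.choose (r + p*k) k : ℝ) := by
  cases k with
  | zero => simp [FC]
  | succ k =>
    rw [FC_succ]
    have keyR : ((r:ℝ) + p*(k+1)) * (Nat.choose (r + p*k + (p-1)) k : ℝ)
        = (Nat.choose (r + p*(k+1)) (k+1) : ℝ) * ((k:ℝ)+1) := by
      exact_mod_cast keyN p r k hp
    push_cast at keyR ⊢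
    linear_combination (-(p:ℝ)) * keyR

lemma rpk_pos (p r k : ℕ) (hp : 1 ≤ p) : (0:ℝ) < (r:ℝ) + p * (k+1) := by
  have h0 : 0 < r + p * (k+1) := lt_of_lt_of_le (Nat.mul_pos hp (Nat.succ_pos k)) (Nat.le_add_left _ _)
  exact_mod_cast h0

lemma FC_nonneg (p r : ℕ) (hp : 1 ≤ p) (k : ℕ) : 0 ≤ FC p r k := by
  cases k with
  | zero => norm_num [FC]
  | succ k =>
    have h := FC_key p r hp (k+1)
    push_cast at h
    have hpos := rpk_pos p r k hp
    have h2 : (0:ℝ) ≤ ((r:ℝ) + p * (k+1)) * FC p r (k+1) := by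
      rw [h]; positivity
    exact nonneg_of_mul_nonneg_right h2 hpos
lemma FC_le_choose (p r : ℕ) (hp : 1 ≤ p) (k : ℕ) :
    FC p r k ≤ (Nat.choose (r + p*k) k : ℝ) := by
  cases k with
  | zero => simp [FC]
  | succ k =>
    have h := FC_key p r hp (k+1)
    push_cast at h
    have hpos := rpk_pos p r k hp
    rw [← mul_le_mul_iff_right₀ hpos, h]
    have : (r:ℝ) ≤ (r:ℝ) + p*(k+1) := le_add_of_nonneg_right (by positivity)
    exact mul_le_mul_of_nonneg_right this (Nat.cast_nonneg _)

lemma FC_succ' (p r k : ℕ) :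
    FC p r (k+1) = Bc p r (k+1) - p * Bc p (r + (p-1)) k := by
  show _ - _ = _
  rw [Bc, Bc]
  have h1 : r + (p-1) + p * k = r + p*k + (p-1) := by omega
  rw [h1]

/-- Pascal's rule for `Bc`. -/
lemma Bc_pascal (p s j : ℕ) : Bc p (s+1) (j+1) = Bc p s (j+1) + Bc p (s+p) j := by
  unfold Bc
  have h1 : s + 1 + p * (j+1) = (s + p*(j+1)) + 1 := by omega
  have h2 : s + p + p * j = s + p*(j+1) := by rw [Nat.mul_succ]; omega
  rw [h1, h2, Nat.choose_succ_succ' (s + p*(j+1)) j]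
  push_cast
  ring

/-- `C(p(j+1), j+1) = p·C(p-1+pj, j)`, i.e. `Bc p 0 (j+1) = p · Bc p (p-1) j`. -/
lemma Bc_zero_succ (p j : ℕ) (hp : 1 ≤ p) : Bc p 0 (j+1) = p * Bc p (p-1) j := by
  unfold Bc
  have hM1 : (p-1) + p*j + 1 = 0 + p * (j+1) := by rw [Nat.mul_succ]; omega
  have h := Nat.add_one_mul_choose_eq ((p-1) + p*j) j
  rw [hM1] at h
  -- h : (0 + p*(j+1)) * choose ((p-1)+p*j) j = choose (0+p*(j+1)) (j+1) * (j+1)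
  have hR : ((0 + p*(j+1) : ℕ) : ℝ) * (Nat.choose ((p-1) + p*j) j : ℝ)
      = (Nat.choose (0 + p*(j+1)) (j+1) : ℝ) * ((j:ℝ)+1) := by exact_mod_cast h
  have hj : ((j:ℝ)+1) ≠ 0 := by positivity
  have hpj : ((0 + p*(j+1) : ℕ) : ℝ) = (p:ℝ) * ((j:ℝ)+1) := by push_cast; ring
  rw [hpj] at hR
  have hcan : ((p:ℝ) * (Nat.choose ((p-1)+p*j) j : ℝ)) * ((j:ℝ)+1)
      = (Nat.choose (0+p*(j+1)) (j+1) : ℝ) * ((j:ℝ)+1) := by linear_combination hR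
  exact (mul_right_cancel₀ hj hcan).symm

lemma rothe (p : ℕ) (hp : 1 ≤ p) (r : ℕ) :
    ∀ n, ∀ s, ∑ k ∈ range (n+1), FC p r k * Bc p s (n-k) = Bc p (r+s) n := by
  intro n
  induction n using Nat.strong_induction_on with
  | _ n ih =>
    match n with
    | 0 => intro s; simp [FC_zero, Bc_zero]
    | (n+1) =>
      intro s
      induction s with
      | zero =>
        rw [Finset.sum_range_succ]
        have h1 : ∀ k ∈ range (n+1), FC p r k * Bc p 0 (n+1-k)
            = p * (FC p r k * Bc p (p-1) (n-k)) := by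
          intro k hk
          rw [mem_range] at hk
          have hnk : n+1-k = (n-k)+1 := by omega
          rw [hnk, Bc_zero_succ p (n-k) hp]
          ring
        rw [Finset.sum_congr rfl h1, ← Finset.mul_sum, ih n (Nat.lt_succ_self n) (p-1)]
        rw [Nat.sub_self, Bc_zero]
        rw [FC_succ' p r n]
        ring
      | succ s ihs =>
        have expand : ∀ k ∈ range (n+2), FC p r k * Bc p (s+1) (n+1-k)
            = FC p r k * Bc p s (n+1-k)
              + (if k ≤ n then FC p r k * Bc p (s+p) (n-k) else 0) := by
          intro k hk
          rw [mem_range] at hk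
          by_cases hkn : k ≤ n
          · have hnk : n+1-k = (n-k)+1 := by omega
            rw [if_pos hkn, hnk, Bc_pascal]
            ring
          · have hk1 : k = n+1 := by omega
            subst hk1
            simp [Bc_zero]
        rw [Finset.sum_congr rfl expand, Finset.sum_add_distrib, ihs]
        have h2 : ∑ k ∈ range (n+2), (if k ≤ n then FC p r k * Bc p (s+p) (n-k) else 0)
            = ∑ k ∈ range (n+1), FC p r k * Bc p (s+p) (n-k) := by
          rw [← Finset.sum_filter]
          congr 1
          ext k
          simp only [mem_filter, mem_range]
          omega
        rw [h2, ih n (Nat.lt_succ_self n) (s+p)]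
        have hfin : Bc p (r+s) (n+1) + Bc p (r+(s+p)) n = Bc p (r+(s+1)) (n+1) := by
          have := Bc_pascal p (r+s) n
          have e1 : r+s+1 = r+(s+1) := by omega
          have e2 : r+s+p = r+(s+p) := by omega
          rw [e1, e2] at this
          linarith [this]
        linarith [hfin]

/-- The Raney convolution identity. -/
lemma raney_conv (p : ℕ) (hp : 1 ≤ p) (r s n : ℕ) :
    ∑ k ∈ range (n+1), FC p r k * FC p s (n-k) = FC p (r+s) n := by
  cases n with
  | zero => simp [FC_zero]
  | succ n =>
    have expand : ∀ k ∈ range (n+2), FC p r k * FC p s (n+1-k)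
        = FC p r k * Bc p s (n+1-k)
          - (if k ≤ n then p * (FC p r k * Bc p (s+(p-1)) (n-k)) else 0) := by
      intro k hk
      rw [mem_range] at hk
      by_cases hkn : k ≤ n
      · have hnk : n+1-k = (n-k)+1 := by omega
        rw [if_pos hkn, hnk, FC_succ']
        ring
      · have hk1 : k = n+1 := by omega
        subst hk1
        rw [if_neg hkn, Nat.sub_self, FC_zero, Bc_zero]
        ring
    rw [Finset.sum_congr rfl expand, Finset.sum_sub_distrib, rothe p hp r (n+1) s]
    have h2 : ∑ k ∈ range (n+2), (if k ≤ n then p * (FC p r k * Bc p (s+(p-1)) (n-k)) else 0)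
        = p * ∑ k ∈ range (n+1), FC p r k * Bc p (s+(p-1)) (n-k) := by
      rw [← Finset.sum_filter, Finset.mul_sum]
      congr 1
      ext k
      simp only [mem_filter, mem_range]
      omega
    rw [h2, rothe p hp r n (s+(p-1))]
    rw [FC_succ' p (r+s) n]
    have e2 : r+(s+(p-1)) = r+s+(p-1) := by omega
    rw [e2]

/-- `FC (m+1) 1 k` is the Fuss–Catalan number. -/
lemma FC_one_eq_fussCatalan (m k : ℕ) : FC (m+1) 1 k = fussCatalan m k := by
  have hkey := FC_key (m+1) 1 (by omega) k
  have hN : Nat.choose ((m+1)*k) k * ((m+1)*k+1) = Nat.choose ((m+1)*k+1) k * (m*k+1) := by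
    have h := Nat.choose_mul_succ_eq ((m+1)*k) k
    have e : (m+1)*k + 1 - k = m*k + 1 := by rw [Nat.add_mul]; omega
    rw [e] at h
    exact h
  have hR : (Nat.choose ((m+1)*k) k : ℝ) * (((m:ℝ)+1)*k+1)
      = (Nat.choose ((m+1)*k+1) k : ℝ) * ((m:ℝ)*k+1) := by exact_mod_cast hN
  rw [show (1 + (m+1)*k : ℕ) = (m+1)*k+1 from by omega] at hkey
  have hd1 : (((m:ℝ)+1)*k+1) ≠ 0 := by positivity
  have hd2 : ((m:ℝ)*k+1) ≠ 0 := by positivity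
  have hnum : (Nat.choose (k*m+k) k : ℝ) = (Nat.choose ((m+1)*k) k : ℝ) := by
    congr 2
    ring
  rw [fussCatalan, hnum]
  rw [eq_div_iff hd2]
  push_cast at hkey
  apply mul_right_cancel₀ hd1
  linear_combination ((m:ℝ)*k+1) * hkey - hR
/-- Shift identity: `FC p p k = FC p 1 (k+1)` for `p ≥ 1`. -/
lemma FC_p_eq_shift (p k : ℕ) (hp : 1 ≤ p) : FC p p k = FC p 1 (k+1) := by
  have h1 := FC_key p p hp k      -- (p + pk) FC p p k = p C(p+pk, k)
  have h2 := FC_key p 1 hp (k+1)  -- (1 + p(k+1)) FC p 1 (k+1) = C(1+p(k+1), k+1)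
  have hN : (p*k+p+1) * Nat.choose (p*k+p) k = Nat.choose (p*k+p+1) (k+1) * (k+1) := by
    have h := Nat.add_one_mul_choose_eq (p*k+p) k
    simpa using h
  have e1 : (1 + p*(k+1) : ℕ) = p*k+p+1 := by rw [Nat.mul_succ]; omega
  have e2 : (p + p*k : ℕ) = p*k+p := by omega
  rw [e1] at h2
  rw [e2] at h1
  have hRN : ((p:ℝ)*k+p+1) * (Nat.choose (p*k+p) k : ℝ) = (Nat.choose (p*k+p+1) (k+1) : ℝ) * ((k:ℝ)+1) := by
    exact_mod_cast hN
  push_cast at h1 h2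
  have hd1 : ((k:ℝ)+1) ≠ 0 := by positivity
  have hd2 : ((p:ℝ)*k+p+1) ≠ 0 := by positivity
  have hdp : (p:ℝ) ≠ 0 := by positivity
  -- h1 : (p + pk) * FC p p k = p * C(pk+p, k)  →  (k+1)(pk+p+1) cancel
  apply mul_right_cancel₀ (b := ((k:ℝ)+1) * ((p:ℝ)*k+p+1) * (p:ℝ)) (by positivity)
  -- FC p p k * ((k+1)(pk+p+1)p) = FC p 1 (k+1) * ((k+1)(pk+p+1)p)
  linear_combination ((p:ℝ)*k+p+1) * h1 - ((k:ℝ)+1) * (p:ℝ) * h2 + (p:ℝ) * hRN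

lemma choose_le_two_pow (n k : ℕ) : Nat.choose n k ≤ 2^n := by
  rcases le_or_gt k n with h | h
  · calc Nat.choose n k ≤ ∑ i ∈ range (n+1), Nat.choose n i :=
        Finset.single_le_sum (fun i _ => Nat.zero_le _) (Finset.mem_range.2 (Nat.lt_succ_of_le h))
    _ = 2^n := Nat.sum_range_choose n
  · rw [Nat.choose_eq_zero_of_lt h]; exact Nat.zero_le _

lemma FC_le_two_pow (p r : ℕ) (hp : 1 ≤ p) (k : ℕ) :
    FC p r k ≤ (2:ℝ)^r * ((2:ℝ)^p)^k := by
  calc FC p r k ≤ (Nat.choose (r + p*k) k : ℝ) := FC_le_choose p r hp k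
  _ ≤ ((2^(r + p*k) : ℕ) : ℝ) := by exact_mod_cast choose_le_two_pow (r + p*k) k
  _ = (2:ℝ)^(r + p*k) := by push_cast; ring
  _ = (2:ℝ)^r * ((2:ℝ)^p)^k := by rw [pow_add, pow_mul]

lemma FC_norm_summable (p r : ℕ) (hp : 1 ≤ p) (w : ℂ) (hw : ‖w‖ ≤ ((2:ℝ)^(p+1))⁻¹) :
    Summable (fun k => ‖(FC p r k : ℂ) * w^k‖) := by
  have hb : ∀ k : ℕ, ‖(FC p r k : ℂ) * w^k‖ ≤ (2:ℝ)^r * (1/2)^k := by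
    intro k
    rw [norm_mul, norm_pow]
    have h1 : ‖(FC p r k : ℂ)‖ = FC p r k := by
      rw [Complex.norm_real, Real.norm_of_nonneg (FC_nonneg p r hp k)]
    rw [h1]
    have h2 : FC p r k ≤ (2:ℝ)^r * ((2:ℝ)^p)^k := FC_le_two_pow p r hp k
    have h3 : ‖w‖^k ≤ (((2:ℝ)^(p+1))⁻¹)^k :=
      pow_le_pow_left₀ (norm_nonneg w) hw k
    calc FC p r k * ‖w‖^k ≤ ((2:ℝ)^r * ((2:ℝ)^p)^k) * (((2:ℝ)^(p+1))⁻¹)^k := by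
          apply mul_le_mul h2 h3 (pow_nonneg (norm_nonneg w) k)
          positivity
    _ = (2:ℝ)^r * (1/2)^k := by
          rw [mul_assoc, ← mul_pow]
          congr 2
          rw [pow_succ]
          field_simp
  have hs : Summable (fun k : ℕ => (2:ℝ)^r * (1/2)^k) :=
    (summable_geometric_of_lt_one (by norm_num) (by norm_num)).mul_left _
  exact Summable.of_nonneg_of_le (fun k => norm_nonneg _) hb hs

lemma FC_summable (p r : ℕ) (hp : 1 ≤ p) (w : ℂ) (hw : ‖w‖ ≤ ((2:ℝ)^(p+1))⁻¹) :
    Summable (fun k => (FC p r k : ℂ) * w^k) :=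
  (FC_norm_summable p r hp w hw).of_norm

lemma tsum_FC_mul (p r s : ℕ) (hp : 1 ≤ p) (w : ℂ) (hw : ‖w‖ ≤ ((2:ℝ)^(p+1))⁻¹) :
    (∑' k, (FC p r k : ℂ) * w^k) * (∑' k, (FC p s k : ℂ) * w^k)
      = ∑' k, (FC p (r+s) k : ℂ) * w^k := by
  rw [tsum_mul_tsum_eq_tsum_sum_antidiagonal_of_summable_norm
    (FC_norm_summable p r hp w hw) (FC_norm_summable p s hp w hw)]
  congr 1
  ext n
  rw [Finset.Nat.sum_antidiagonal_eq_sum_range_succ_mk]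
  have : ∀ k ∈ range (n+1), ((FC p r k : ℂ) * w^k) * ((FC p s (n-k) : ℂ) * w^(n-k))
      = ((FC p r k * FC p s (n-k) : ℝ) : ℂ) * w^n := by
    intro k hk
    rw [mem_range] at hk
    have hkn : w^k * w^(n-k) = w^n := by rw [← pow_add]; congr 1; omega
    push_cast
    rw [← hkn]
    ring
  rw [Finset.sum_congr rfl this, ← Finset.sum_mul, ← Complex.ofReal_sum,
    raney_conv p hp r s n]

lemma tsum_FC_pow (p : ℕ) (hp : 1 ≤ p) (w : ℂ) (hw : ‖w‖ ≤ ((2:ℝ)^(p+1))⁻¹) :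
    ∀ j, 1 ≤ j → (∑' k, (FC p 1 k : ℂ) * w^k)^j = ∑' k, (FC p j k : ℂ) * w^k := by
  intro j
  induction j with
  | zero => omega
  | succ j ihj =>
    intro _
    rcases Nat.eq_zero_or_pos j with h | h
    · subst h
      rw [pow_one]
    · have hj : 1 ≤ j := h
      rw [pow_succ, ihj hj, mul_comm]
      rw [tsum_FC_mul p 1 j hp w hw]
      rw [Nat.add_comm 1 j]

/-- Functional equation `S = 1 + w S^p` for the Fuss–Catalan generating function. -/
lemma tsum_FC_funceq (p : ℕ) (hp : 1 ≤ p) (w : ℂ) (hw : ‖w‖ ≤ ((2:ℝ)^(p+1))⁻¹) :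
    (∑' k, (FC p 1 k : ℂ) * w^k)
      = 1 + w * (∑' k, (FC p 1 k : ℂ) * w^k)^p := by
  rw [tsum_FC_pow p hp w hw p hp]
  rw [← tsum_mul_left]
  have hshift : ∀ k : ℕ, w * ((FC p p k : ℂ) * w^k) = (FC p 1 (k+1) : ℂ) * w^(k+1) := by
    intro k
    rw [FC_p_eq_shift p k hp, pow_succ]
    ring
  rw [tsum_congr hshift]
  have hsum := FC_summable p 1 hp w hw
  rw [Summable.tsum_eq_zero_add hsum]
  norm_num [FC_zero]

lemma fussCatalan_nonneg (m k : ℕ) : 0 ≤ fussCatalan m k := by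
  unfold fussCatalan; positivity

lemma fussCatalan_le (m k : ℕ) : fussCatalan m k ≤ ((2:ℝ)^(m+1))^k := by
  unfold fussCatalan
  have h1 : (Nat.choose (k*m+k) k : ℝ) / ((m:ℝ)*k+1) ≤ (Nat.choose (k*m+k) k : ℝ) := by
    apply div_le_self (Nat.cast_nonneg _)
    have : (0:ℝ) ≤ (m:ℝ)*k := by positivity
    linarith
  refine h1.trans ?_
  calc (Nat.choose (k*m+k) k : ℝ) ≤ ((2^(k*m+k) : ℕ) : ℝ) := by
        exact_mod_cast choose_le_two_pow (k*m+k) k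
  _ = ((2:ℝ)^(m+1))^k := by
        push_cast
        rw [← pow_mul]
        congr 1
        ring

/-- The measure has support in `[0, M]` where `M = 2^(m+1)+1`. -/
lemma support_bounded (m : ℕ) (ν : Measure ℝ) [IsProbabilityMeasure ν]
    (hνint : ∀ k : ℕ, Integrable (fun x => x ^ k) ν)
    (hmom : ∀ k : ℕ, ∫ x, x ^ k ∂ν = fussCatalan m k)
    (hae : ∀ᵐ x ∂ν, 0 ≤ x) :
    ν (Set.Ioi ((2:ℝ)^(m+1) + 1)) = 0 := by
  set M : ℝ := (2:ℝ)^(m+1) + 1 with hM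
  have hM1 : (1:ℝ) ≤ M := by
    have : (0:ℝ) ≤ 2^(m+1) := by positivity
    simp only [hM]; linarith
  have hMpos : (0:ℝ) < M := by positivity
  have hkey : ∀ k : ℕ, M^k * (ν (Set.Ioi M)).toReal ≤ ((2:ℝ)^(m+1))^k := by
    intro k
    have hxknn : ∀ᵐ x ∂ν, 0 ≤ x^k := by
      filter_upwards [hae] with x hx using pow_nonneg hx k
    have h1 : M^k * (ν (Set.Ioi M)).toReal ≤ ∫ x in Set.Ioi M, x^k ∂ν := by
      apply setIntegral_ge_of_const_le_real measurableSet_Ioi (measure_ne_top ν _)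
      · intro x hx
        exact pow_le_pow_left₀ hMpos.le (le_of_lt hx) k
      · exact (hνint k).integrableOn
    have h2 : ∫ x in Set.Ioi M, x^k ∂ν ≤ ∫ x, x^k ∂ν :=
      setIntegral_le_integral (hνint k) hxknn
    rw [hmom k] at h2
    exact (h1.trans h2).trans (fussCatalan_le m k)
  have hc : ∀ k : ℕ, (ν (Set.Ioi M)).toReal ≤ ((2:ℝ)^(m+1) / M)^k := by
    intro k
    have := hkey k
    rw [div_pow, le_div_iff₀ (by positivity)]
    calc (ν (Set.Ioi M)).toReal * M^k = M^k * (ν (Set.Ioi M)).toReal := by ring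
    _ ≤ ((2:ℝ)^(m+1))^k := this
  have hlim : Filter.Tendsto (fun k : ℕ => ((2:ℝ)^(m+1) / M)^k) Filter.atTop (nhds 0) := by
    apply tendsto_pow_atTop_nhds_zero_of_lt_one (by positivity)
    rw [div_lt_one hMpos]
    simp [hM]
  have h0 : (ν (Set.Ioi M)).toReal ≤ 0 :=
    le_of_tendsto_of_tendsto' tendsto_const_nhds hlim hc
  have h0' : (ν (Set.Ioi M)).toReal = 0 := le_antisymm h0 ENNReal.toReal_nonneg
  exact (ENNReal.toReal_eq_zero_iff _).mp h0' |>.resolve_right (measure_ne_top ν _)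

lemma stieltjes_large (m : ℕ) (hm : 2 ≤ m) (ν : Measure ℝ) [IsProbabilityMeasure ν]
    (hνint : ∀ k : ℕ, Integrable (fun x => x ^ k) ν)
    (hmom : ∀ k : ℕ, ∫ x, x ^ k ∂ν = fussCatalan m k)
    (hae : ∀ᵐ x ∂ν, 0 ≤ x)
    (hsupp : ν (Set.Ioi ((2:ℝ)^(m+1)+1)) = 0)
    (z : ℂ) (hz : 0 < z.im) (hbig : (2:ℝ)^(m+3) ≤ ‖z‖) :
    1 + z * (∫ x, ((x : ℂ) - z)⁻¹ ∂ν)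
      + (-1) ^ (m + 1) * z ^ m * (∫ x, ((x : ℂ) - z)⁻¹ ∂ν) ^ (m + 1) = 0 := by
  have hz0 : z ≠ 0 := by
    intro h; rw [h] at hz; simp at hz
  set M : ℝ := (2:ℝ)^(m+1) + 1 with hM
  have hMpos : (0:ℝ) < M := by positivity
  have hM2 : M ≤ (2:ℝ)^(m+2) := by
    have h1 : (1:ℝ) ≤ 2^(m+1) := one_le_pow₀ (by norm_num)
    have h2 : (2:ℝ)^(m+2) = 2^(m+1) * 2 := pow_succ 2 (m+1)
    rw [hM, h2]; linarith
  have hzpos : (0:ℝ) < ‖z‖ := norm_pos_iff.mpr hz0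
  have h23 : ((2:ℝ)^(m+2)) ≤ ‖z‖ := by
    refine le_trans ?_ hbig
    apply pow_le_pow_right₀ (by norm_num)
    omega
  have hMz : M * ‖z‖⁻¹ ≤ 1/2 := by
    rw [mul_inv_le_iff₀ hzpos]
    calc M ≤ (2:ℝ)^(m+2) := hM2
    _ = 1/2 * ((2:ℝ)^(m+2) * 2) := by ring
    _ = 1/2 * (2:ℝ)^(m+3) := by rw [← pow_succ]
    _ ≤ 1/2 * ‖z‖ := by linarith
  have hxae : ∀ᵐ x ∂ν, x ∈ Set.Icc 0 M := by
    have h2 := measure_eq_zero_iff_ae_notMem.mp hsupp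
    filter_upwards [hae, h2] with x h1 h2
    simp only [Set.mem_Ioi, not_lt] at h2
    exact ⟨h1, h2⟩
  -- the expansion terms
  set F : ℕ → ℝ → ℂ := fun k x => -(((x^k : ℝ) : ℂ) * (z^(k+1))⁻¹) with hF
  have hFint : ∀ k, Integrable (F k) ν := by
    intro k
    exact (((hνint k).ofReal).mul_const _).neg
  have hFbound : ∀ k, ∀ᵐ x ∂ν, ‖F k x‖ ≤ ‖z‖⁻¹ * (M * ‖z‖⁻¹)^k := by
    intro k
    filter_upwards [hxae] with x hx
    rw [hF]
    simp only [norm_neg, norm_mul, norm_inv, norm_pow, Complex.norm_real]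
    have h1 : ‖x‖^k ≤ M^k := by
      apply pow_le_pow_left₀ (norm_nonneg x)
      rw [Real.norm_eq_abs, abs_le]
      constructor <;> [linarith [hx.1, hx.2]; exact hx.2]
    calc ‖x‖^k * (‖z‖^(k+1))⁻¹ ≤ M^k * (‖z‖^(k+1))⁻¹ := by
          apply mul_le_mul_of_nonneg_right h1 (by positivity)
    _ = ‖z‖⁻¹ * (M * ‖z‖⁻¹)^k := by
          rw [mul_pow, pow_succ, mul_inv]
          ring
  have hIbound : ∀ k, ∫ x, ‖F k x‖ ∂ν ≤ ‖z‖⁻¹ * (M * ‖z‖⁻¹)^k := by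
    intro k
    have := integral_mono_ae (hFint k).norm (integrable_const _) (hFbound k)
    rwa [integral_const, Measure.real, measure_univ, ENNReal.toReal_one, one_smul] at this
  have hsumnorm : Summable (fun k => ∫ x, ‖F k x‖ ∂ν) := by
    apply Summable.of_nonneg_of_le
      (fun k => integral_nonneg (fun x => norm_nonneg _)) hIbound
    apply Summable.mul_left
    apply summable_geometric_of_lt_one (by positivity)
    calc M * ‖z‖⁻¹ ≤ 1/2 := hMz
    _ < 1 := by norm_num
  -- pointwise expansion
  have hpt : ∀ᵐ (x : ℝ) ∂ν, (((x : ℝ) : ℂ) - z)⁻¹ = ∑' k, F k x := by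
    filter_upwards [hxae] with x hx
    set u : ℂ := (x : ℂ) * z⁻¹ with hu
    have hunorm : ‖u‖ < 1 := by
      rw [hu, norm_mul, norm_inv, Complex.norm_real]
      have : |x| ≤ M := by rw [abs_le]; constructor <;> [linarith [hx.1, hx.2]; exact hx.2]
      calc |x| * ‖z‖⁻¹ ≤ M * ‖z‖⁻¹ := by
            apply mul_le_mul_of_nonneg_right this (by positivity)
      _ ≤ 1/2 := hMz
      _ < 1 := by norm_num
    have hgeo := hasSum_geometric_of_norm_lt_one hunorm
    have hgeo2 := hgeo.mul_left (-z⁻¹)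
    have heq : (fun k : ℕ => -z⁻¹ * u^k) = fun k => F k x := by
      funext k
      rw [hF, hu]
      simp only
      rw [mul_pow, ← inv_pow]
      push_cast
      ring
    rw [heq] at hgeo2
    rw [hgeo2.tsum_eq]
    have hune : (1 : ℂ) - u ≠ 0 := by
      intro h
      have : ‖(1:ℂ) - u‖ = 0 := by rw [h]; simp
      have h1 : (1:ℝ) - ‖u‖ ≤ ‖(1:ℂ) - u‖ := by
        have := norm_sub_norm_le (1:ℂ) u
        simpa using this
      rw [this] at h1
      linarith
    have hxz : ((x:ℂ) - z) = (-z) * (1 - u) := by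
      rw [hu]
      field_simp
      ring
    rw [hxz, mul_inv]
    have hninv : (-z)⁻¹ = -z⁻¹ := by field_simp
    rw [hninv]
  -- swap integral and sum
  have hswap : ∫ x, ((x : ℂ) - z)⁻¹ ∂ν = ∑' k, ∫ x, F k x ∂ν := by
    rw [integral_congr_ae hpt]
    exact (integral_tsum_of_summable_integral_norm hFint hsumnorm).symm
  -- compute each integral
  have hIk : ∀ k, ∫ x, F k x ∂ν = -((fussCatalan m k : ℂ) * (z^(k+1))⁻¹) := by
    intro k
    rw [hF]
    simp only
    rw [integral_neg]
    congr 1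
    have h1 : ∀ x : ℝ, ((x^k : ℝ) : ℂ) * (z^(k+1))⁻¹ = ((x^k : ℝ) : ℂ) • ((z^(k+1))⁻¹ : ℂ) := by
      intro x; rw [smul_eq_mul]
    simp_rw [h1]
    rw [integral_smul_const, smul_eq_mul]
    congr 1
    have h2 := Complex.ofRealCLM.integral_comp_comm (hνint k)
    simp only [Complex.ofRealCLM_apply] at h2
    rw [h2, hmom k]
  rw [hswap]
  simp_rw [hIk]
  -- rewrite as power series in z⁻¹
  have hterm : ∀ k : ℕ, -((fussCatalan m k : ℂ) * (z^(k+1))⁻¹)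
      = (-z⁻¹) * ((FC (m+1) 1 k : ℝ) * (z⁻¹)^k) := by
    intro k
    rw [FC_one_eq_fussCatalan]
    rw [← inv_pow, pow_succ]
    push_cast
    ring
  rw [tsum_congr hterm, tsum_mul_left]
  set w : ℂ := z⁻¹ with hwdef
  set g : ℂ := ∑' k, ((FC (m+1) 1 k : ℝ) : ℂ) * w^k with hg
  have hwnorm : ‖w‖ ≤ ((2:ℝ)^(m+1+1))⁻¹ := by
    rw [hwdef, norm_inv]
    apply inv_anti₀ (by positivity) h23
  have hfe : g = 1 + w * g^(m+1) := tsum_FC_funceq (m+1) (by omega) w hwnorm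
  -- final algebra
  have hzw : z * w = 1 := by rw [hwdef]; field_simp
  have hzm : z^m * w^(m+1) = w := by
    rw [pow_succ, ← mul_assoc, ← mul_pow, hzw]
    simp
  have hneg : ((-1:ℂ))^(m+1) * ((-1:ℂ))^(m+1) = 1 := by
    rw [← pow_add]
    apply Even.neg_one_pow
    exact ⟨m+1, by ring⟩
  have hexp : (-w*g)^(m+1) = (-1:ℂ)^(m+1) * (w^(m+1) * g^(m+1)) := by
    rw [show (-w*g) = -(w*g) from by ring, neg_pow, mul_pow]
  rw [hexp]
  have h5 : z * (-w*g) = -g := by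
    have h5' : z * (-w*g) = -((z*w)*g) := by ring
    rw [h5', hzw]; ring
  rw [h5]
  have h6 : (-1:ℂ)^(m+1) * z^m * ((-1:ℂ)^(m+1) * (w^(m+1)*g^(m+1))) = w * g^(m+1) := by
    have h6' : (-1:ℂ)^(m+1) * z^m * ((-1:ℂ)^(m+1) * (w^(m+1)*g^(m+1)))
        = ((-1:ℂ)^(m+1) * (-1:ℂ)^(m+1)) * ((z^m*w^(m+1)) * g^(m+1)) := by ring
    rw [h6', hneg, hzm]; ring
  rw [h6]
  linear_combination -hfe

lemma stieltjes_integrable (ν : Measure ℝ) [IsProbabilityMeasure ν] (z : ℂ) (hz : 0 < z.im) :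
    Integrable (fun x : ℝ => (((x:ℝ):ℂ) - z)⁻¹) ν := by
  have hne : ∀ x : ℝ, ((x:ℂ) - z) ≠ 0 := by
    intro x h
    have h2 := congrArg Complex.im h
    simp only [Complex.sub_im, Complex.ofReal_im, Complex.zero_im, zero_sub] at h2
    linarith
  have hcont : Continuous fun x : ℝ => (((x:ℝ):ℂ) - z)⁻¹ :=
    (Complex.continuous_ofReal.sub continuous_const).inv₀ hne
  apply Integrable.mono' (integrable_const (z.im)⁻¹) hcont.aestronglyMeasurable
  filter_upwards with x
  rw [norm_inv]
  have h1 : z.im ≤ ‖(x:ℂ) - z‖ := by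
    have h2 := Complex.abs_im_le_norm ((x:ℂ) - z)
    simp only [Complex.sub_im, Complex.ofReal_im, zero_sub, abs_neg] at h2
    rw [abs_of_pos hz] at h2
    exact h2
  have h2 : (0:ℝ) < ‖(x:ℂ) - z‖ := lt_of_lt_of_le hz h1
  exact inv_anti₀ hz h1

lemma stieltjes_hasDeriv (ν : Measure ℝ) [IsProbabilityMeasure ν] (z₀ : ℂ) (hz₀ : 0 < z₀.im) :
    HasDerivAt (fun z : ℂ => ∫ x : ℝ, (((x:ℝ):ℂ) - z)⁻¹ ∂ν)
      (∫ x : ℝ, ((((x:ℝ):ℂ) - z₀)^2)⁻¹ ∂ν) z₀ := by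
  set ε : ℝ := z₀.im / 2 with hε
  have hεpos : 0 < ε := by simp [hε]; linarith
  have him : ∀ z ∈ Metric.ball z₀ ε, ε ≤ z.im := by
    intro z hzb
    rw [Metric.mem_ball] at hzb
    have h1 : |z.im - z₀.im| ≤ dist z z₀ := by
      rw [Complex.dist_eq]
      have := Complex.abs_im_le_norm (z - z₀)
      simpa using this
    have h2 : |z.im - z₀.im| < ε := lt_of_le_of_lt h1 hzb
    rw [abs_lt] at h2
    have := h2.1
    simp only [hε] at *
    linarith
  have hne : ∀ z ∈ Metric.ball z₀ ε, ∀ x : ℝ, ((x:ℂ) - z) ≠ 0 := by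
    intro z hzb x h
    have h2 := congrArg Complex.im h
    simp only [Complex.sub_im, Complex.ofReal_im, Complex.zero_im, zero_sub] at h2
    have := him z hzb
    linarith
  have key := hasDerivAt_integral_of_dominated_loc_of_deriv_le (μ := ν)
    (F := fun (z : ℂ) (x : ℝ) => (((x:ℝ):ℂ) - z)⁻¹)
    (F' := fun (z : ℂ) (x : ℝ) => ((((x:ℝ):ℂ) - z)^2)⁻¹)
    (x₀ := z₀) (bound := fun _ => (ε^2)⁻¹) (s := Metric.ball z₀ ε) (Metric.ball_mem_nhds z₀ hεpos) ?_ ?_ ?_ ?_ ?_ ?_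
  · exact key.2
  · -- measurability eventually
    apply Filter.eventually_of_mem (Metric.ball_mem_nhds z₀ hεpos)
    intro z hzb
    exact ((Complex.continuous_ofReal.sub continuous_const).inv₀
      (hne z hzb)).aestronglyMeasurable
  · exact stieltjes_integrable ν z₀ hz₀
  · exact ((Complex.continuous_ofReal.sub continuous_const).pow 2 |>.inv₀
      (fun x => pow_ne_zero 2 (hne z₀ (Metric.mem_ball_self hεpos) x))).aestronglyMeasurable
  · filter_upwards with x
    intro z hzb
    rw [norm_inv, norm_pow]
    have h1 : z.im ≤ ‖(x:ℂ) - z‖ := by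
      have h2 := Complex.abs_im_le_norm ((x:ℂ) - z)
      simp only [Complex.sub_im, Complex.ofReal_im, zero_sub, abs_neg] at h2
      rw [abs_of_pos (lt_of_lt_of_le hεpos (him z hzb))] at h2
      exact h2
    have h3 : ε ≤ ‖(x:ℂ) - z‖ := le_trans (him z hzb) h1
    have h4 : ε^2 ≤ ‖(x:ℂ) - z‖^2 := by
      apply pow_le_pow_left₀ hεpos.le h3
    exact inv_anti₀ (by positivity) h4
  · exact integrable_const _
  · filter_upwards with x
    intro z hzb
    have hc : HasDerivAt (fun z : ℂ => ((x:ℝ):ℂ) - z) (-1) z := by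
      simpa using (hasDerivAt_id z).const_sub ((x:ℝ):ℂ)
    have h := hc.inv (hne z hzb x)
    have h' : ((((x:ℝ):ℂ) - z)^2)⁻¹ = - -1 / (((x:ℝ):ℂ) - z)^2 := by
      rw [neg_neg, div_eq_mul_inv, one_mul]
    rw [h']
    exact h

end Aux

/-- **Algebraic equation for the Stieltjes transform of the Fuss–Catalan distribution.**
If `ν` is a probability measure on `[0, ∞)` whose `k`-th moment is the Fuss–Catalan number
`α_k(m)`, then its Stieltjes transform `s(z) = ∫ (x - z)⁻¹ dν(x)` satisfies
`1 + z·s(z) + (-1)^{m+1}·z^m·s(z)^{m+1} = 0` for every `z` in the upper half-plane. -/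
theorem stieltjes_fussCatalan_equation
    (m : ℕ) (hm : 2 ≤ m)
    (ν : Measure ℝ) (hνp : IsProbabilityMeasure ν) (hν0 : ν (Set.Iio 0) = 0)
    (hνint : ∀ k : ℕ, Integrable (fun x => x ^ k) ν)
    (hmom : ∀ k : ℕ, ∫ x, x ^ k ∂ν = fussCatalan m k)
    (z : ℂ) (hz : 0 < z.im) :
    1 + z * (∫ x, ((x : ℂ) - z)⁻¹ ∂ν)
      + (-1) ^ (m + 1) * z ^ m * (∫ x, ((x : ℂ) - z)⁻¹ ∂ν) ^ (m + 1) = 0 := by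
  have hae : ∀ᵐ x ∂ν, 0 ≤ x := by
    have h := measure_eq_zero_iff_ae_notMem.mp hν0
    filter_upwards [h] with x hx
    simpa using hx
  have hsupp := support_bounded m ν hνint hmom hae
  set S : ℂ → ℂ := fun w => ∫ x : ℝ, (((x:ℝ):ℂ) - w)⁻¹ ∂ν with hS
  set Φ : ℂ → ℂ := fun w => 1 + w * S w + (-1)^(m+1) * w^m * (S w)^(m+1) with hΦ
  set U : Set ℂ := {w : ℂ | 0 < w.im} with hU
  have hUopen : IsOpen U := isOpen_lt continuous_const Complex.continuous_im
  have hUconn : IsPreconnected U := (convex_halfSpace_im_gt 0).isPreconnected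
  have hSdiff : DifferentiableOn ℂ S U := by
    intro w hw
    exact ((stieltjes_hasDeriv ν w hw).differentiableAt).differentiableWithinAt
  have hΦdiff : DifferentiableOn ℂ Φ U := by
    apply DifferentiableOn.add
    apply DifferentiableOn.add
    · exact differentiableOn_const 1
    · exact differentiableOn_id.mul hSdiff
    · exact ((differentiableOn_const _).mul (differentiable_pow m).differentiableOn).mul
        (hSdiff.pow (m+1))
  have hΦan : AnalyticOnNhd ℂ Φ U := hΦdiff.analyticOnNhd hUopen
  set c : ℝ := (2:ℝ)^(m+3) + 1 with hc
  have hcpos : (0:ℝ) < c := by positivity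
  set z₀ : ℂ := (c : ℂ) * Complex.I with hz₀def
  have hz₀im : z₀.im = c := by simp [hz₀def]
  have hz₀U : z₀ ∈ U := by
    simp only [hU, Set.mem_setOf_eq, hz₀im]
    exact hcpos
  set V : Set ℂ := {w : ℂ | 0 < w.im ∧ (2:ℝ)^(m+3) < ‖w‖} with hV
  have hVopen : IsOpen V := by
    apply IsOpen.inter (isOpen_lt continuous_const Complex.continuous_im)
      (isOpen_lt continuous_const continuous_norm)
  have hz₀V : z₀ ∈ V := by
    constructor
    · rw [hz₀im]; exact hcpos
    · rw [hz₀def]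
      rw [norm_mul, Complex.norm_I, mul_one, Complex.norm_real]
      rw [Real.norm_of_nonneg hcpos.le]
      rw [hc]; linarith
  have hnear : Φ =ᶠ[nhds z₀] 0 := by
    apply Filter.eventually_of_mem (hVopen.mem_nhds hz₀V)
    intro w hw
    exact stieltjes_large m hm ν hνint hmom hae hsupp w hw.1 hw.2.le
  have hzero := hΦan.eqOn_zero_of_preconnected_of_eventuallyEq_zero hUconn hz₀U hnear
  have := hzero hz
  simpa [hΦ, hS] using this
end

section
/- Let A and B be n×n Hermitian matrices and let z = u + iv with v > 0. Then |Tr (A − zI)⁻¹ − Tr (B − zI)⁻¹| ≤ rank(A − B)/v. -/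
open Matrix LinearMap Module Finset
open scoped ComplexInnerProductSpace

private lemma aux_det_isUnit {n : ℕ} {X : Matrix (Fin n) (Fin n) ℂ} (hX : X.IsHermitian)
    {z : ℂ} (hz : z.im ≠ 0) : IsUnit (X - z • 1).det := by
  rw [isUnit_iff_ne_zero]
  intro h
  obtain ⟨w, hw0, hw⟩ := Matrix.exists_mulVec_eq_zero_iff.mpr h
  have hw' : X *ᵥ w = z • w := by
    have h0 : X *ᵥ w - z • w = 0 := by
      simpa [Matrix.sub_mulVec, Matrix.smul_mulVec, Matrix.one_mulVec] using hw
    rwa [sub_eq_zero] at h0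
  set x : EuclideanSpace ℂ (Fin n) := (WithLp.equiv 2 (Fin n → ℂ)).symm w with hx
  have hx0 : x ≠ 0 := by
    rw [hx]; exact fun h => hw0 (by simpa using congrArg WithLp.ofLp h)
  have hTx : Matrix.toEuclideanLin X x = z • x := by
    rw [Matrix.toEuclideanLin_apply]
    simp only [hx, Equiv.apply_symm_apply, hw']
    rw [show ((WithLp.equiv 2 (Fin n → ℂ)).symm w).ofLp = w from rfl, hw']
    rfl
  have hsym := (Matrix.isHermitian_iff_isSymmetric.mp hX).conj_inner_sym x x
  rw [hTx, inner_smul_left] at hsym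
  have hc : ⟪x, x⟫ = (‖x‖ : ℂ) ^ 2 := inner_self_eq_norm_sq_to_K x
  rw [hc] at hsym
  have hne : ((‖x‖ : ℂ)) ^ 2 ≠ 0 := by
    simpa [pow_eq_zero_iff] using norm_ne_zero_iff.mpr hx0
  have heq : z = starRingEnd ℂ z := by
    have h2 : z * (‖x‖ : ℂ) ^ 2 = starRingEnd ℂ z * (‖x‖ : ℂ) ^ 2 := by
      simpa [_root_.map_mul, Complex.conj_conj, ← Complex.ofReal_pow, Complex.conj_ofReal]
        using hsym
    exact mul_right_cancel₀ hne h2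
  exact hz (by simpa [Complex.conj_eq_iff_im] using heq.symm)

private lemma aux_isometry {n : ℕ} {U : Matrix (Fin n) (Fin n) ℂ} (hU : Uᴴ * U = 1)
    (x : EuclideanSpace ℂ (Fin n)) : ‖Matrix.toEuclideanLin U x‖ = ‖x‖ := by
  have hmul : Matrix.toEuclideanLin Uᴴ (Matrix.toEuclideanLin U x)
      = Matrix.toEuclideanLin (Uᴴ * U) x := by
    rw [Matrix.toEuclideanLin_eq_toLin, Matrix.toLin_mul _ (PiLp.basisFun 2 ℂ (Fin n)) _]
    rfl
  have h1 : ⟪Matrix.toEuclideanLin U x, Matrix.toEuclideanLin U x⟫ = ⟪x, x⟫ := by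
    rw [← LinearMap.adjoint_inner_right, ← Matrix.toEuclideanLin_conjTranspose_eq_adjoint,
      hmul, hU]
    congr 1
    rw [Matrix.toEuclideanLin_eq_toLin, Matrix.toLin_one]
    rfl
  have e1 : ⟪Matrix.toEuclideanLin U x, Matrix.toEuclideanLin U x⟫
      = ((‖Matrix.toEuclideanLin U x‖ : ℂ)) ^ 2 := inner_self_eq_norm_sq_to_K _
  have e2 : ⟪x, x⟫ = ((‖x‖ : ℂ)) ^ 2 := inner_self_eq_norm_sq_to_K x
  have h2 : ((‖Matrix.toEuclideanLin U x‖ : ℂ)) ^ 2 = ((‖x‖ : ℂ)) ^ 2 := by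
    rw [← e1, ← e2]; exact h1
  have h3 : ‖Matrix.toEuclideanLin U x‖ ^ 2 = ‖x‖ ^ 2 := by exact_mod_cast h2
  calc ‖Matrix.toEuclideanLin U x‖ = Real.sqrt (‖Matrix.toEuclideanLin U x‖ ^ 2) :=
        (Real.sqrt_sq (norm_nonneg _)).symm
    _ = Real.sqrt (‖x‖ ^ 2) := by rw [h3]
    _ = ‖x‖ := Real.sqrt_sq (norm_nonneg _)

private lemma aux_unitary {n : ℕ} {X : Matrix (Fin n) (Fin n) ℂ} (hX : X.IsHermitian)
    {z : ℂ} (hz : z.im ≠ 0) :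
    ((X - z • 1)⁻¹ * (X - (starRingEnd ℂ z) • 1))ᴴ
      * ((X - z • 1)⁻¹ * (X - (starRingEnd ℂ z) • 1)) = 1 := by
  set P := X - z • 1 with hP
  set Q := X - (starRingEnd ℂ z) • 1 with hQ
  have hPh : Pᴴ = Q := by
    rw [hP, hQ, conjTranspose_sub, hX.eq, conjTranspose_smul, conjTranspose_one]
    rfl
  have hQh : Qᴴ = P := by
    rw [hQ, hP, conjTranspose_sub, hX.eq, conjTranspose_smul, conjTranspose_one]
    simp
  have hdP : IsUnit P.det := aux_det_isUnit hX hz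
  have hdQ : IsUnit Q.det := aux_det_isUnit hX (by simpa using neg_ne_zero.mpr hz)
  have hcomm : P * Q = Q * P := by
    rw [hP, hQ]
    simp only [sub_mul, mul_sub, smul_mul_assoc, mul_smul_comm, one_mul, mul_one, smul_sub,
      smul_smul, mul_comm z (starRingEnd ℂ z)]
    abel
  have hinv : Q⁻¹ * P⁻¹ = P⁻¹ * Q⁻¹ := by
    rw [← Matrix.mul_inv_rev P Q, hcomm, Matrix.mul_inv_rev]
  calc (P⁻¹ * Q)ᴴ * (P⁻¹ * Q) = (Qᴴ * (P⁻¹)ᴴ) * (P⁻¹ * Q) := by rw [conjTranspose_mul]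
    _ = (P * Q⁻¹) * (P⁻¹ * Q) := by rw [hQh, Matrix.conjTranspose_nonsing_inv, hPh]
    _ = P * ((Q⁻¹ * P⁻¹) * Q) := by simp only [Matrix.mul_assoc]
    _ = P * ((P⁻¹ * Q⁻¹) * Q) := by rw [hinv]
    _ = (P * P⁻¹) * (Q⁻¹ * Q) := by simp only [Matrix.mul_assoc]
    _ = 1 := by rw [Matrix.mul_nonsing_inv _ hdP, Matrix.nonsing_inv_mul _ hdQ, one_mul]

private lemma aux_trace_bound {n : ℕ} (D : Matrix (Fin n) (Fin n) ℂ) {C : ℝ} (hC : 0 ≤ C)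
    (hDx : ∀ x : EuclideanSpace ℂ (Fin n), ‖Matrix.toEuclideanLin D x‖ ≤ C * ‖x‖) :
    ‖D.trace‖ ≤ (D.rank : ℝ) * C := by
  set T : EuclideanSpace ℂ (Fin n) →ₗ[ℂ] EuclideanSpace ℂ (Fin n) :=
    Matrix.toEuclideanLin D with hT
  set K : Submodule ℂ (EuclideanSpace ℂ (Fin n)) := LinearMap.range T with hK
  set k : ℕ := finrank ℂ K with hk
  have hrank : D.rank = k := by
    rw [Matrix.rank_eq_finrank_range_toLin D (PiLp.basisFun 2 ℂ (Fin n))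
      (PiLp.basisFun 2 ℂ (Fin n))]
    rw [hk, hK, hT, Matrix.toEuclideanLin_eq_toLin]
  have hkn : k ≤ n := by
    have h := Submodule.finrank_le K
    rwa [finrank_euclideanSpace_fin] at h
  set u := stdOrthonormalBasis ℂ K with hu
  set v : Fin n → EuclideanSpace ℂ (Fin n) :=
    fun i => if h : (i : ℕ) < k then (u ⟨i, h⟩ : EuclideanSpace ℂ (Fin n)) else 0 with hv
  set s : Set (Fin n) := {i | (i : ℕ) < k} with hs
  have hvon : Orthonormal ℂ (s.restrict v) := by
    have h1 : Orthonormal ℂ (K.subtypeₗᵢ ∘ u) := u.orthonormal.comp_linearIsometry K.subtypeₗᵢ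
    have h2 : s.restrict v = (K.subtypeₗᵢ ∘ u) ∘ (fun p : s => (⟨(p : Fin n), p.2⟩ : Fin k)) := by
      funext p
      simp only [Set.restrict_apply, hv, Function.comp_apply]
      exact dif_pos (show ((p : Fin n) : ℕ) < k from p.2)
    rw [h2]
    refine h1.comp _ fun p q hpq => ?_
    have h := congrArg Fin.val hpq
    exact Subtype.ext (Fin.ext h)
  obtain ⟨b, hb⟩ := hvon.exists_orthonormalBasis_extension_of_card_eq
    (by simp [finrank_euclideanSpace_fin])
  have htr : D.trace = ∑ i, ⟪b i, T (b i)⟫ := by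
    have h0 : LinearMap.trace ℂ (EuclideanSpace ℂ (Fin n)) T = D.trace := by
      rw [LinearMap.trace_eq_matrix_trace ℂ (PiLp.basisFun 2 ℂ (Fin n)) T]
      congr 1
      rw [hT, Matrix.toEuclideanLin_eq_toLin, LinearMap.toMatrix_toLin]
    have h1 : LinearMap.trace ℂ (EuclideanSpace ℂ (Fin n)) T = ∑ i, ⟪b i, T (b i)⟫ := by
      rw [LinearMap.trace_eq_matrix_trace ℂ b.toBasis T, Matrix.trace]
      refine Finset.sum_congr rfl fun i _ => ?_
      rw [Matrix.diag_apply, LinearMap.toMatrix_apply, OrthonormalBasis.coe_toBasis_repr_apply,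
        OrthonormalBasis.repr_apply_apply, OrthonormalBasis.coe_toBasis]
    rw [← h0, h1]
  have hKspan : Submodule.span ℂ (Set.range fun j : Fin k => (u j : EuclideanSpace ℂ (Fin n))) = K := by
    have h2 : (Set.range fun j : Fin k => (u j : EuclideanSpace ℂ (Fin n))) = K.subtype '' Set.range u := by
      rw [← Set.range_comp]
      rfl
    rw [h2, ← Submodule.map_span]
    have h3 : Submodule.span ℂ (Set.range u) = ⊤ := by
      have h4 := u.toBasis.span_eq
      rwa [OrthonormalBasis.coe_toBasis] at h4
    rw [h3, Submodule.map_top, Submodule.range_subtype]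
  have hzero : ∀ i : Fin n, ¬((i : ℕ) < k) → ⟪b i, T (b i)⟫ = 0 := by
    intro i hi
    have hKle : K ≤ (Submodule.span ℂ {b i})ᗮ := by
      rw [← hKspan, Submodule.span_le]
      rintro _ ⟨j, rfl⟩
      rw [SetLike.mem_coe, Submodule.mem_orthogonal_singleton_iff_inner_left]
      set i' : Fin n := ⟨j, lt_of_lt_of_le j.isLt hkn⟩ with hi'
      have hi's : i' ∈ s := j.isLt
      have hbi' : b i' = (u j : EuclideanSpace ℂ (Fin n)) := by
        rw [hb i' hi's]
        simp only [hv]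
        rw [dif_pos (show ((i' : Fin n) : ℕ) < k from j.isLt)]
      have hne : i' ≠ i := fun h => hi (h ▸ hi's)
      show ⟪(u j : EuclideanSpace ℂ (Fin n)), b i⟫ = 0
      rw [← hbi']
      exact b.orthonormal.2 hne
    have hTK : T (b i) ∈ K := LinearMap.mem_range_self T (b i)
    have h5 := hKle hTK
    rw [Submodule.mem_orthogonal_singleton_iff_inner_left] at h5
    rw [← inner_eq_zero_symm] at h5
    exact h5
  have hcard : (Finset.univ.filter fun i : Fin n => (i : ℕ) < k).card = k := by
    have hmap : (Finset.univ.filter fun i : Fin n => (i : ℕ) < k)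
        = Finset.map (Fin.castLEEmb hkn) Finset.univ := by
      ext i
      simp only [Finset.mem_filter, Finset.mem_univ, true_and, Finset.mem_map,
        Fin.castLEEmb_apply]
      constructor
      · intro hi
        exact ⟨⟨(i : ℕ), hi⟩, rfl⟩
      · rintro ⟨j, rfl⟩
        simpa using j.isLt
    rw [hmap, Finset.card_map, Finset.card_univ, Fintype.card_fin]
  calc ‖D.trace‖ = ‖∑ i, ⟪b i, T (b i)⟫‖ := by rw [htr]
    _ ≤ ∑ i, ‖⟪b i, T (b i)⟫‖ := norm_sum_le _ _
    _ ≤ ∑ i : Fin n, (if (i : ℕ) < k then C else 0) := by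
        refine Finset.sum_le_sum fun i _ => ?_
        by_cases hi : (i : ℕ) < k
        · rw [if_pos hi]
          calc ‖⟪b i, T (b i)⟫‖ ≤ ‖b i‖ * ‖T (b i)‖ := norm_inner_le_norm _ _
            _ ≤ ‖b i‖ * (C * ‖b i‖) :=
                mul_le_mul_of_nonneg_left (hDx (b i)) (norm_nonneg _)
            _ = C := by rw [b.orthonormal.1 i]; ring
        · rw [if_neg hi, hzero i hi, norm_zero]
    _ = k * C := by
        rw [Finset.sum_ite, Finset.sum_const_zero, add_zero, Finset.sum_const, nsmul_eq_mul,
          hcard]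
    _ = (D.rank : ℝ) * C := by rw [hrank]

/-- **Resolvent trace perturbation bound.** For Hermitian matrices `A`, `B` and `z = u + iv`
with `v > 0`, `|Tr (A − zI)⁻¹ − Tr (B − zI)⁻¹| ≤ rank(A − B)/v`. -/
theorem trace_resolvent_rank_bound
    (n : ℕ) (A B : Matrix (Fin n) (Fin n) ℂ)
    (hA : A.IsHermitian) (hB : B.IsHermitian)
    (z : ℂ) (hz : 0 < z.im) :
    ‖Matrix.trace (A - z • 1)⁻¹ - Matrix.trace (B - z • 1)⁻¹‖
      ≤ ((A - B).rank : ℝ) / z.im := by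
  have hzim : z.im ≠ 0 := ne_of_gt hz
  set P : Matrix (Fin n) (Fin n) ℂ := A - z • 1 with hP
  set PB : Matrix (Fin n) (Fin n) ℂ := B - z • 1 with hPB
  set QA : Matrix (Fin n) (Fin n) ℂ := A - (starRingEnd ℂ z) • 1 with hQA
  set QB : Matrix (Fin n) (Fin n) ℂ := B - (starRingEnd ℂ z) • 1 with hQB
  have hdA : IsUnit P.det := aux_det_isUnit hA hzim
  have hdB : IsUnit PB.det := aux_det_isUnit hB hzim
  set e : ℂ := z - starRingEnd ℂ z with he
  have he' : e = ((2 * z.im : ℝ) : ℂ) * Complex.I := by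
    rw [he, Complex.sub_conj]
  have he0 : e ≠ 0 := by
    rw [he']
    exact mul_ne_zero (Complex.ofReal_ne_zero.mpr (by positivity)) Complex.I_ne_zero
  set UA := P⁻¹ * QA with hUA
  set UB := PB⁻¹ * QB with hUB
  have hUAu : UAᴴ * UA = 1 := aux_unitary hA hzim
  have hUBu : UBᴴ * UB = 1 := aux_unitary hB hzim
  have hQAe : QA = P + e • (1 : Matrix (Fin n) (Fin n) ℂ) := by
    rw [hQA, hP, he, sub_smul]; abel
  have hQBe : QB = PB + e • (1 : Matrix (Fin n) (Fin n) ℂ) := by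
    rw [hQB, hPB, he, sub_smul]; abel
  have hUA' : UA = 1 + e • P⁻¹ := by
    rw [hUA, hQAe, Matrix.mul_add, Matrix.nonsing_inv_mul _ hdA, mul_smul_comm,
      mul_one]
  have hUB' : UB = 1 + e • PB⁻¹ := by
    rw [hUB, hQBe, Matrix.mul_add, Matrix.nonsing_inv_mul _ hdB, mul_smul_comm,
      mul_one]
  have hDe : P⁻¹ - PB⁻¹ = e⁻¹ • (UA - UB) := by
    rw [hUA', hUB']
    have : (1 + e • P⁻¹) - (1 + e • PB⁻¹) = e • (P⁻¹ - PB⁻¹) := by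
      rw [smul_sub]; abel
    rw [this, smul_smul, inv_mul_cancel₀ he0, one_smul]
  have hnorme : ‖e‖ = 2 * z.im := by
    rw [he', norm_mul, Complex.norm_I, mul_one, Complex.norm_real, Real.norm_eq_abs,
      abs_of_pos (by linarith)]
  have hnorm : ∀ x : EuclideanSpace ℂ (Fin n),
      ‖Matrix.toEuclideanLin (P⁻¹ - PB⁻¹) x‖ ≤ (1 / z.im) * ‖x‖ := by
    intro x
    rw [hDe, _root_.map_smul, _root_.map_sub]
    rw [LinearMap.smul_apply, LinearMap.sub_apply, norm_smul]
    have h6 : ‖(Matrix.toEuclideanLin UA) x - (Matrix.toEuclideanLin UB) x‖ ≤ 2 * ‖x‖ := by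
      calc ‖(Matrix.toEuclideanLin UA) x - (Matrix.toEuclideanLin UB) x‖
          ≤ ‖(Matrix.toEuclideanLin UA) x‖ + ‖(Matrix.toEuclideanLin UB) x‖ := norm_sub_le _ _
        _ = 2 * ‖x‖ := by rw [aux_isometry hUAu, aux_isometry hUBu]; ring
    have h7 : ‖e⁻¹‖ = (2 * z.im)⁻¹ := by rw [norm_inv, hnorme]
    calc ‖e⁻¹‖ * ‖(Matrix.toEuclideanLin UA) x - (Matrix.toEuclideanLin UB) x‖
        ≤ (2 * z.im)⁻¹ * (2 * ‖x‖) := by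
          rw [h7]
          exact mul_le_mul_of_nonneg_left h6 (by positivity)
      _ = (1 / z.im) * ‖x‖ := by field_simp
  have hres : P⁻¹ - PB⁻¹ = P⁻¹ * (B - A) * PB⁻¹ := by
    have hBA : B - A = PB - P := by rw [hPB, hP]; abel
    rw [hBA, Matrix.mul_sub, Matrix.sub_mul, Matrix.mul_assoc,
      Matrix.mul_nonsing_inv _ hdB, Matrix.mul_one, Matrix.nonsing_inv_mul _ hdA,
      Matrix.one_mul]
  have hrk : ((P⁻¹ - PB⁻¹).rank : ℝ) ≤ ((A - B).rank : ℝ) := by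
    have h8 : (P⁻¹ - PB⁻¹).rank ≤ (B - A).rank := by
      rw [hres]
      exact le_trans (Matrix.rank_mul_le_left _ _)
        (Matrix.rank_mul_le_right _ _)
    have h9 : (B - A).rank ≤ (A - B).rank := by
      have hneg : B - A = (A - B) * (-1 : Matrix (Fin n) (Fin n) ℂ) := by
        rw [Matrix.mul_neg, Matrix.mul_one, neg_sub]
      rw [hneg]
      exact Matrix.rank_mul_le_left _ _
    exact_mod_cast le_trans h8 h9
  have hbound := aux_trace_bound (P⁻¹ - PB⁻¹) (C := 1 / z.im) (by positivity) hnorm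
  rw [Matrix.trace_sub] at hbound
  calc ‖Matrix.trace P⁻¹ - Matrix.trace PB⁻¹‖
      ≤ ((P⁻¹ - PB⁻¹).rank : ℝ) * (1 / z.im) := hbound
    _ ≤ ((A - B).rank : ℝ) * (1 / z.im) := by
        exact mul_le_mul_of_nonneg_right hrk (by positivity)
    _ = ((A - B).rank : ℝ) / z.im := by ring
end

section
/- Let s be the Stieltjes transform of a symmetric probability distribution on ℝ satisfying 1 + z·s(z) − z·s(z)³ = 0 for all z in the upper half-plane, and let s_n be the Stieltjes transform of a probability distribution on ℝ satisfying 1 + z·s_n(z) − z·s_n(z)³ = δ_n(z), where additionally s_n arises as s_n(z) = (1/(2n)) E Tr (V − zI)⁻¹ for the 2n×2n Hermitian matrix V = H²J built from a matrix X with independent entries of mean 0, variance 1 and |X_{jk}| ≤ τ_n√n, so that E‖V‖₂² ≤ C·n. Then there exist positive constants C₀ and C₁ such that for all z = u + iv with v ≥ C₀, |s(z) − s_n(z)| ≤ C₁·|δ_n(z)|/v. -/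
open MeasureTheory ProbabilityTheory Matrix

/-- The normalized random matrix `X = n^{-1/2}(X_{jk})`. -/
noncomputable def normMat {Ω : Type*} (n : ℕ) (X : Fin n → Fin n → Ω → ℂ) (ω : Ω) :
    Matrix (Fin n) (Fin n) ℂ :=
  (((Real.sqrt n)⁻¹ : ℝ) : ℂ) • Matrix.of fun j k => X j k ω

/-- The `2n × 2n` block-diagonal matrix `H = diag(X, X*)`. -/
noncomputable def blockH (n : ℕ) (X : Matrix (Fin n) (Fin n) ℂ) :
    Matrix (Fin n ⊕ Fin n) (Fin n ⊕ Fin n) ℂ :=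
  Matrix.fromBlocks X 0 0 Xᴴ

/-- The `2n × 2n` matrix `J = [[0, I],[I, 0]]`. -/
def blockJ (n : ℕ) : Matrix (Fin n ⊕ Fin n) (Fin n ⊕ Fin n) ℂ :=
  Matrix.fromBlocks 0 1 1 0

/-- The resolvent `R(z) = (H^m J − zI)⁻¹`. -/
noncomputable def resolventR (n m : ℕ) (X : Matrix (Fin n) (Fin n) ℂ) (z : ℂ) :
    Matrix (Fin n ⊕ Fin n) (Fin n ⊕ Fin n) ℂ :=
  ((blockH n X) ^ m * blockJ n - z • 1)⁻¹


section Aux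

open Matrix

lemma trace_resolvent_bound' {N : Type*} [Fintype N] [DecidableEq N]
    (A : Matrix N N ℂ) (hA : A.IsHermitian) (z : ℂ) (hz : 0 < z.im) :
    ‖((A - z • 1)⁻¹).trace‖ ≤ (Fintype.card N) / z.im := by
  set U : Matrix N N ℂ := (hA.eigenvectorUnitary : Matrix N N ℂ) with hUdef
  have hU : U * star U = 1 := Matrix.mem_unitaryGroup_iff.mp (hA.eigenvectorUnitary).2
  have hU' : star U * U = 1 := Matrix.mem_unitaryGroup_iff'.mp (hA.eigenvectorUnitary).2
  have hne : ∀ i, ((hA.eigenvalues i : ℂ) - z) ≠ 0 := by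
    intro i h
    have h2 := congrArg Complex.im h
    simp [Complex.sub_im, Complex.ofReal_im] at h2
    linarith
  have hdiag : (diagonal (RCLike.ofReal ∘ hA.eigenvalues) : Matrix N N ℂ) - z • 1
      = diagonal (fun i => (hA.eigenvalues i : ℂ) - z) := by
    rw [Matrix.smul_one_eq_diagonal, Matrix.diagonal_sub]
    rfl
  have key : A - z • 1 = U * diagonal (fun i => (hA.eigenvalues i : ℂ) - z) * star U := by
    conv_lhs => rw [hA.spectral_theorem]
    rw [← hdiag]
    rw [Matrix.mul_sub, Matrix.sub_mul, mul_smul_comm, mul_one, smul_mul_assoc, hU]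
    rfl
  have hinv : (A - z • 1)⁻¹
      = U * diagonal (fun i => ((hA.eigenvalues i : ℂ) - z)⁻¹) * star U := by
    apply Matrix.inv_eq_right_inv
    rw [key]
    have hDD : diagonal (fun i => (hA.eigenvalues i : ℂ) - z) *
        diagonal (fun i => ((hA.eigenvalues i : ℂ) - z)⁻¹) = 1 := by
      rw [Matrix.diagonal_mul_diagonal]
      have : (fun i => ((hA.eigenvalues i : ℂ) - z) * ((hA.eigenvalues i : ℂ) - z)⁻¹)
          = fun _ => (1 : ℂ) := by
        funext i; exact mul_inv_cancel₀ (hne i)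
      rw [this, Matrix.diagonal_one]
    have hassoc : U * diagonal (fun i => (hA.eigenvalues i : ℂ) - z) * star U *
          (U * diagonal (fun i => ((hA.eigenvalues i : ℂ) - z)⁻¹) * star U)
        = U * (diagonal (fun i => (hA.eigenvalues i : ℂ) - z) * ((star U * U) *
          diagonal (fun i => ((hA.eigenvalues i : ℂ) - z)⁻¹))) * star U := by
      noncomm_ring
    rw [hassoc, hU', one_mul, hDD, mul_one, hU]
  rw [hinv, Matrix.trace_mul_cycle, hU', Matrix.one_mul, Matrix.trace_diagonal]
  calc ‖∑ i, ((hA.eigenvalues i : ℂ) - z)⁻¹‖ ≤ ∑ i, ‖((hA.eigenvalues i : ℂ) - z)⁻¹‖ :=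
        norm_sum_le _ _
    _ ≤ ∑ _i : N, 1 / z.im := by
        apply Finset.sum_le_sum
        intro i _
        rw [norm_inv, one_div]
        apply inv_anti₀ hz
        calc z.im = |((hA.eigenvalues i : ℂ) - z).im| := by
              simp [Complex.sub_im, abs_of_nonpos, hz.le]
          _ ≤ ‖(hA.eigenvalues i : ℂ) - z‖ := Complex.abs_im_le_norm _
    _ = (Fintype.card N) / z.im := by
        rw [Finset.sum_const, Finset.card_univ, nsmul_eq_mul, mul_one_div]

lemma blockV_isHermitian' (n : ℕ) (X : Matrix (Fin n) (Fin n) ℂ) :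
    ((blockH n X) ^ 2 * blockJ n).IsHermitian := by
  show _ᴴ = _
  simp [blockH, blockJ, pow_two, Matrix.fromBlocks_multiply, Matrix.fromBlocks_conjTranspose,
    Matrix.conjTranspose_mul]

end Aux

/-- **Stability of the cubic equation for Stieltjes transforms (case `m = 2`).** If `s` is the
Stieltjes transform of a symmetric probability distribution with `1 + z·s(z) − z·s(z)³ = 0`,
and `s_n(z) = (1/(2n)) E Tr (V − zI)⁻¹` (for `V = H²J` built from a matrix with independent
centred entries of unit variance, bounded by `τ√n`, with `E‖V‖₂² ≤ C_V·n`) satisfies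
`1 + z·s_n(z) − z·s_n(z)³ = δ_n(z)`, then there are `C₀, C₁ > 0` such that
`|s(z) − s_n(z)| ≤ C₁·|δ_n(z)|/v` for all `z = u + iv` with `v ≥ C₀`. -/
theorem stieltjes_equation_stability
    (n : ℕ) (τ CV : ℝ) (hτ : 0 < τ)
    {Ω : Type*} [MeasurableSpace Ω] (μ : Measure Ω) [IsProbabilityMeasure μ]
    (X : Fin n → Fin n → Ω → ℂ)
    (hmeas : ∀ j k, Measurable (X j k))
    (hindep : iIndepFun
      (fun p : Fin n × Fin n => X p.1 p.2) μ)
    (hmean : ∀ j k, ∫ ω, X j k ω ∂μ = 0)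
    (hvar : ∀ j k, ∫ ω, ‖X j k ω‖ ^ 2 ∂μ = 1)
    (hbdd : ∀ j k, ∀ᵐ ω ∂μ, ‖X j k ω‖ ≤ τ * Real.sqrt n)
    (hV : ∫ ω, ∑ p : Fin n ⊕ Fin n, ∑ q : Fin n ⊕ Fin n,
        ‖((blockH n (normMat n X ω)) ^ 2 * blockJ n) p q‖ ^ 2 ∂μ ≤ CV * n)
    (ν : Measure ℝ) (hνp : IsProbabilityMeasure ν)
    (hνsymm : Measure.map (fun x : ℝ => -x) ν = ν)
    (s : ℂ → ℂ) (hs : ∀ z : ℂ, s z = ∫ x, ((x : ℂ) - z)⁻¹ ∂ν)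
    (hseq : ∀ z : ℂ, 0 < z.im → 1 + z * s z - z * (s z) ^ 3 = 0)
    (sn δ : ℂ → ℂ)
    (hsn : ∀ z : ℂ, sn z =
      (1 / (2 * n : ℂ)) * ∫ ω, (resolventR n 2 (normMat n X ω) z).trace ∂μ)
    (hδ : ∀ z : ℂ, 0 < z.im → 1 + z * sn z - z * (sn z) ^ 3 = δ z) :
    ∃ C₀ > 0, ∃ C₁ > 0, ∀ z : ℂ, C₀ ≤ z.im →
      ‖s z - sn z‖ ≤ C₁ * ‖δ z‖ / z.im := by
  refine ⟨3, by norm_num, 2, by norm_num, fun z hz3 => ?_⟩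
  have hv : (0:ℝ) < z.im := by linarith
  have hsb : ‖s z‖ ≤ 1 / z.im := by
    rw [hs z]
    have h1 : ∀ᵐ (x : ℝ) ∂ν, ‖((x:ℂ) - z)⁻¹‖ ≤ 1 / z.im := by
      filter_upwards with x
      rw [norm_inv, one_div]
      apply inv_anti₀ hv
      calc z.im = |((x:ℂ) - z).im| := by
            rw [Complex.sub_im, Complex.ofReal_im, zero_sub, abs_neg, abs_of_pos hv]
        _ ≤ ‖(x:ℂ) - z‖ := Complex.abs_im_le_norm _
    calc ‖∫ (x : ℝ), ((x:ℂ) - z)⁻¹ ∂ν‖ ≤ (1 / z.im) * (ν Set.univ).toReal :=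
          norm_integral_le_of_norm_le_const h1
      _ = 1 / z.im := by simp
  have hsnb : ‖sn z‖ ≤ 1 / z.im := by
    rw [hsn z]
    have hbound : ∀ᵐ ω ∂μ, ‖(resolventR n 2 (normMat n X ω) z).trace‖ ≤ (2*n : ℝ) / z.im := by
      filter_upwards with ω
      have h := trace_resolvent_bound' _ (blockV_isHermitian' n (normMat n X ω)) z hv
      have hc : (Fintype.card (Fin n ⊕ Fin n) : ℝ) = 2 * n := by
        simp [Fintype.card_sum, Fintype.card_fin]; ring
      rw [hc] at h
      simpa [resolventR] using h
    have hI : ‖∫ ω, (resolventR n 2 (normMat n X ω) z).trace ∂μ‖ ≤ (2*n : ℝ) / z.im := by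
      calc ‖∫ ω, (resolventR n 2 (normMat n X ω) z).trace ∂μ‖
          ≤ ((2*n:ℝ)/z.im) * (μ Set.univ).toReal := norm_integral_le_of_norm_le_const hbound
        _ = (2*n:ℝ)/z.im := by simp
    rw [norm_mul]
    have h2n : ‖(1 / (2*n : ℂ))‖ = 1/(2*(n:ℝ)) := by
      rw [norm_div, norm_one, norm_mul]
      simp
    rw [h2n]
    rcases Nat.eq_zero_or_pos n with hn | hn
    · subst hn
      simp
      positivity
    · have hn' : (0:ℝ) < (n:ℝ) := by exact_mod_cast hn
      calc (1/(2*(n:ℝ))) * ‖∫ ω, (resolventR n 2 (normMat n X ω) z).trace ∂μ‖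
          ≤ (1/(2*(n:ℝ))) * ((2*n:ℝ)/z.im) := by
            apply mul_le_mul_of_nonneg_left hI
            positivity
        _ = 1 / z.im := by field_simp
  have h13 : 1 / z.im ≤ 1/3 := one_div_le_one_div_of_le (by norm_num) hz3
  set a := s z with ha'
  set b := sn z with hb'
  have ha : ‖a‖ ≤ 1/3 := hsb.trans h13
  have hb : ‖b‖ ≤ 1/3 := hsnb.trans h13
  have key : z * (a - b) * (1 - (a^2 + a*b + b^2)) = -(δ z) := by
    have h1 := hseq z hv
    have h2 := hδ z hv
    linear_combination h1 - h2
  have hQ : ‖a^2 + a*b + b^2‖ ≤ 1/3 := by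
    calc ‖a^2 + a*b + b^2‖ ≤ ‖a^2 + a*b‖ + ‖b^2‖ := norm_add_le _ _
      _ ≤ ‖a^2‖ + ‖a*b‖ + ‖b^2‖ := by linarith [norm_add_le (a^2) (a*b)]
      _ = ‖a‖^2 + ‖a‖*‖b‖ + ‖b‖^2 := by rw [norm_pow, norm_mul, norm_pow]
      _ ≤ 1/3 := by nlinarith [norm_nonneg a, norm_nonneg b]
  have h1Q : (2:ℝ)/3 ≤ ‖1 - (a^2 + a*b + b^2)‖ := by
    have h := norm_sub_norm_le (1:ℂ) (a^2 + a*b + b^2)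
    rw [norm_one] at h
    linarith
  have him : z.im ≤ ‖z‖ := le_trans (le_abs_self _) (Complex.abs_im_le_norm z)
  have hdn : ‖δ z‖ = ‖z‖ * ‖a - b‖ * ‖1 - (a^2 + a*b + b^2)‖ := by
    rw [← norm_neg (δ z), ← key, norm_mul, norm_mul]
  rw [le_div_iff₀ hv]
  have hchain : z.im * ‖a - b‖ * (2/3) ≤ ‖z‖ * ‖a - b‖ * ‖1 - (a^2 + a*b + b^2)‖ :=
    mul_le_mul (mul_le_mul_of_nonneg_right him (norm_nonneg _)) h1Q (by norm_num)
      (mul_nonneg (norm_nonneg _) (norm_nonneg _))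
  rw [← hdn] at hchain
  have hδ0 : (0:ℝ) ≤ ‖δ z‖ := norm_nonneg _
  linarith
end
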